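/- (Szász's lemma) Suppose the univariate polynomial f(z) = 1 + Σ_{i=1}^k aᵢ z^i = Π_{j=1}^k (1 + ξⱼ z) is stable. Then Σ_{j=1}^k |ξⱼ|² ≤ 3|a₁|² + 2|a₂|. -/

import Mathlib

open Polynomial Finset

lemma szasz_coeffs (k : ℕ) (ξ : Fin k → ℂ) (s : Finset (Fin k)) :
    (∏ j ∈ s, (1 + Polynomial.C (ξ j) * Polynomial.X)).coeff 0 = 1 ∧
    (∏ j ∈ s, (1 + Polynomial.C (ξ j) * Polynomial.X)).coeff 1 = ∑ j ∈ s, ξ j ∧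
    2 * (∏ j ∈ s, (1 + Polynomial.C (ξ j) * Polynomial.X)).coeff 2
      = (∑ j ∈ s, ξ j) ^ 2 - ∑ j ∈ s, (ξ j) ^ 2 := by
  induction s using Finset.induction with
  | empty => simp [Polynomial.coeff_one]
  | insert a s h ih =>
    obtain ⟨h0, h1, h2⟩ := ih
    rw [Finset.prod_insert h, Finset.sum_insert h, Finset.sum_insert h]
    set p := ∏ j ∈ s, (1 + Polynomial.C (ξ j) * Polynomial.X) with hp
    have e : (1 + Polynomial.C (ξ a) * Polynomial.X) * p
        = p + Polynomial.C (ξ a) * (Polynomial.X * p) := by ring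
    have c0 : ((1 + Polynomial.C (ξ a) * Polynomial.X) * p).coeff 0 = 1 := by
      rw [e]; simp [Polynomial.mul_coeff_zero, h0]
    have c1 : ((1 + Polynomial.C (ξ a) * Polynomial.X) * p).coeff 1 = ξ a + ∑ j ∈ s, ξ j := by
      rw [e]
      simp only [Polynomial.coeff_add, Polynomial.coeff_C_mul]
      rw [show (1 : ℕ) = 0 + 1 from rfl, Polynomial.coeff_X_mul, h0, h1]
      ring
    have c2 : 2 * ((1 + Polynomial.C (ξ a) * Polynomial.X) * p).coeff 2
        = (ξ a + ∑ j ∈ s, ξ j) ^ 2 - (ξ a ^ 2 + ∑ j ∈ s, (ξ j) ^ 2) := by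
      rw [e]
      simp only [Polynomial.coeff_add, Polynomial.coeff_C_mul]
      rw [show (2 : ℕ) = 1 + 1 from rfl, Polynomial.coeff_X_mul, h1]
      have : (1:ℕ) + 1 = 2 := rfl
      rw [this]
      linear_combination h2 + 2 * (ξ a) * h1 - 2 * ξ a * h1
    exact ⟨c0, c1, by linear_combination c2⟩



/-- Szász's lemma: if the univariate polynomial
`f(z) = 1 + ∑_{i=1}^k aᵢ zⁱ = ∏_{j=1}^k (1 + ξⱼ z)` is stable (non-vanishing
on the open upper half-plane), then `∑ⱼ |ξⱼ|² ≤ 3|a₁|² + 2|a₂|`. -/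
theorem szasz_lemma (k : ℕ) (ξ : Fin k → ℂ) (f : Polynomial ℂ)
    (hf : f = ∏ j, (1 + Polynomial.C (ξ j) * Polynomial.X))
    (hstable : ∀ ζ : ℂ, 0 < ζ.im → f.eval ζ ≠ 0) :
    ∑ j, ‖ξ j‖ ^ 2 ≤
      3 * ‖f.coeff 1‖ ^ 2 + 2 * ‖f.coeff 2‖ := by
  subst hf
  obtain ⟨h0, h1, h2⟩ := szasz_coeffs k ξ Finset.univ
  -- stability forces nonpositive imaginary parts
  have him : ∀ j, (ξ j).im ≤ 0 := by
    intro j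
    by_contra hcon
    push_neg at hcon
    have hne : ξ j ≠ 0 := by
      intro h0'; rw [h0'] at hcon; simp at hcon
    have hpos : 0 < (-(ξ j)⁻¹).im := by
      have hrw : (-(ξ j)⁻¹).im = (ξ j).im / Complex.normSq (ξ j) := by
        rw [Complex.neg_im, Complex.inv_im]; ring
      rw [hrw]
      exact div_pos hcon (Complex.normSq_pos.mpr hne)
    refine hstable _ hpos ?_
    rw [Polynomial.eval_prod]
    refine Finset.prod_eq_zero (Finset.mem_univ j) ?_
    simp [mul_neg, mul_inv_cancel₀ hne]
  set a1 : ℂ := ∑ j, ξ j with ha1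
  set c2 : ℂ := (∏ j, (1 + Polynomial.C (ξ j) * Polynomial.X)).coeff 2 with hc2
  rw [h1]
  -- pointwise identity
  have key : ∀ z : ℂ, ‖z‖ ^ 2 = (z ^ 2).re + 2 * z.im ^ 2 := by
    intro z
    rw [Complex.sq_norm, Complex.normSq_apply, pow_two, Complex.mul_re]
    ring
  have hA : ∑ j, ‖ξ j‖ ^ 2
      = (∑ j, (ξ j) ^ 2).re + 2 * ∑ j, (ξ j).im ^ 2 := by
    rw [Complex.re_sum, Finset.mul_sum, ← Finset.sum_add_distrib]
    exact Finset.sum_congr rfl fun j _ => key (ξ j)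
  have hB : ∑ j, (ξ j).im ^ 2 ≤ a1.im ^ 2 := by
    have := Finset.sum_sq_le_sq_sum_of_nonneg
      (f := fun j => -(ξ j).im) (s := Finset.univ)
      (fun j _ => neg_nonneg.mpr (him j))
    calc ∑ j, (ξ j).im ^ 2 = ∑ j, (-(ξ j).im) ^ 2 := by
          exact Finset.sum_congr rfl fun j _ => by ring
      _ ≤ (∑ j, -(ξ j).im) ^ 2 := this
      _ = a1.im ^ 2 := by rw [Finset.sum_neg_distrib, ha1, Complex.im_sum]; ring
  have hQ : (∑ j, (ξ j) ^ 2) = a1 ^ 2 - 2 * c2 := by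
    linear_combination h2
  have hQre : (∑ j, (ξ j) ^ 2).re = a1.re ^ 2 - a1.im ^ 2 - 2 * c2.re := by
    have := congrArg Complex.re hQ
    simpa [Complex.sub_re, Complex.mul_re, pow_two] using this
  have habs1 : ‖a1‖ ^ 2 = a1.re ^ 2 + a1.im ^ 2 := by
    rw [Complex.sq_norm, Complex.normSq_apply]; ring
  have habs2 : -c2.re ≤ ‖c2‖ := by
    have := Complex.abs_re_le_norm c2
    rw [abs_le] at this; linarith [this.1]
  have hnn : 0 ≤ ‖a1‖ ^ 2 := by positivity
  nlinarith [hA, hB, hQre, habs1, habs2, hnn]
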